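/- arXiv:2512.19345 — 2 statements merged into one kernel-verified Lean document; each statement's English description precedes it below -/
import Mathlib

section
/- Let p be a prime and let G be a finite Abelian p-group with |G| = p^n and exponent p^e. Then the set of orders of kernels of the irreducible complex characters of G is exactly {p^{n-e}, p^{n-e+1}, …, p^n}. In particular, if G is elementary Abelian with |G| = p^n, this set is {p^{n-1}, p^n}. -/
open CategoryTheory

/-- The kernel of the character of a complex representation `V` of `G`:
`ker χ = {g ∈ G : χ(g) = χ(1)}`. -/
noncomputable def charKer {G : Type} [Group G] (V : FDRep ℂ G) : Set G :=
  {g | V.character g = V.character 1}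

/-- The center of the character of a complex representation `V` of `G`:
`Z(χ) = {g ∈ G : |χ(g)| = χ(1)}`. -/
noncomputable def charCenter {G : Type} [Group G] (V : FDRep ℂ G) : Set G :=
  {g | (‖V.character g‖ : ℂ) = V.character 1}

open Module

section Aux

variable {k G : Type} [Field k] [Monoid G]

lemma fdRep_mono_inj {X Y : FDRep k G} (f : Y ⟶ X) [Mono f] :
    Function.Injective (f.hom.hom.hom : Y →ₗ[k] X) := by
  rw [← LinearMap.ker_eq_bot]
  by_contra hK
  set K := LinearMap.ker (f.hom.hom.hom : Y →ₗ[k] X) with hKdef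
  have hinv : ∀ g : G, ∀ y ∈ K, Y.ρ g y ∈ K := by
    intro g y hy
    have hc : f.hom (Y.ρ g y) = X.ρ g (f.hom y) := congrArg (fun φ => φ.hom y) (f.comm g)
    have hy0 : f.hom y = 0 := hy
    show f.hom (Y.ρ g y) = 0
    rw [hc, hy0, map_zero]
  let ρK : Representation k G K :=
    { toFun := fun g => (Y.ρ g).restrict (hinv g)
      map_one' := by ext y; simp
      map_mul' := fun g h => by
        ext y
        show Y.ρ (g * h) y.1 = Y.ρ g (Y.ρ h y.1)
        rw [map_mul]; rfl }
  let U : FDRep k G := FDRep.of ρK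
  let ι : U ⟶ Y := ⟨FGModuleCat.ofHom (K.subtype : _ →ₗ[k] _), fun g => rfl⟩
  have hz : ι ≫ f = 0 ≫ f := by
    apply Action.hom_ext
    ext y
    simp only [Action.comp_hom, Action.zero_hom, Limits.zero_comp]
    exact y.2
  have hι : ι = 0 := Mono.right_cancellation _ _ hz
  obtain ⟨y, hy, hy0⟩ := Submodule.exists_mem_ne_zero_of_ne_bot hK
  have := congrArg (fun φ => φ.hom.hom ⟨y, hy⟩) hι
  exact hy0 this

lemma fdRep_simple_of_finrank_eq_one (X : FDRep k G) (h : finrank k X = 1) : Simple X := by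
  have hnt : Nontrivial X := Module.nontrivial_of_finrank_pos (R := k) (h ▸ one_pos)
  constructor
  intro Y f _
  constructor
  · intro hiso h0
    have h1 : 𝟙 X = 0 := by
      calc 𝟙 X = inv f ≫ f := (IsIso.inv_hom_id f).symm
        _ = inv f ≫ 0 := congrArg (fun g => inv f ≫ g) h0
        _ = 0 := Limits.comp_zero
    obtain ⟨x, hx⟩ := exists_ne (0 : X)
    have := congrArg (fun φ => φ.hom x) h1
    exact hx this
  · intro h0
    have hinj : Function.Injective (f.hom.hom.hom : Y →ₗ[k] X) := fdRep_mono_inj f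
    have hne : (f.hom.hom.hom : Y →ₗ[k] X) ≠ 0 := by
      intro hc
      apply h0
      apply Action.hom_ext
      apply FGModuleCat.hom_ext
      simpa using hc
    have hrange : LinearMap.range (f.hom.hom.hom : Y →ₗ[k] X) = ⊤ := by
      have h1 : LinearMap.range (f.hom.hom.hom : Y →ₗ[k] X) ≠ ⊥ := by
        rw [Ne, LinearMap.range_eq_bot]; exact hne
      have h2 : 0 < finrank k (LinearMap.range (f.hom.hom.hom : Y →ₗ[k] X)) := by
        rw [Module.finrank_pos_iff]
        exact Submodule.nontrivial_iff_ne_bot.mpr h1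
      have h3 : finrank k (LinearMap.range (f.hom.hom.hom : Y →ₗ[k] X)) ≤ 1 := by
        have := Submodule.finrank_le (LinearMap.range (f.hom.hom.hom : Y →ₗ[k] X))
        have hh : finrank k (X.V.obj : Type) = 1 := h
        omega
      have hh : finrank k (X.V.obj : Type) = 1 := h
      have h4 : finrank k (LinearMap.range (f.hom.hom.hom : Y →ₗ[k] X)) = finrank k (X.V.obj : Type) := by
        omega
      exact Submodule.eq_top_of_finrank_eq h4
    have hbij : Function.Bijective (f.hom.hom.hom : Y →ₗ[k] X) :=
      ⟨hinj, LinearMap.range_eq_top.mp hrange⟩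
    let e : Y ≃ₗ[k] X := LinearEquiv.ofBijective _ hbij
    have : IsIso f.hom := by
      refine ⟨⟨FGModuleCat.ofHom e.symm.toLinearMap, ?_, ?_⟩⟩
      · ext y; exact e.left_inv y
      · ext x; exact e.right_inv x
    infer_instance

end Aux

section Schur

variable {G : Type} [CommGroup G]

/-- The action of a group element as an endomorphism of a representation,
for a commutative group. -/
noncomputable def ρEnd (V : FDRep ℂ G) (g : G) : V ⟶ V :=
  ⟨FGModuleCat.ofHom (V.ρ g), fun h => by
    ext v
    show V.ρ g (V.ρ h v) = V.ρ h (V.ρ g v)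
    rw [← Module.End.mul_apply, ← Module.End.mul_apply, ← map_mul, ← map_mul, mul_comm]⟩

lemma exists_char_hom (V : FDRep ℂ G) [hs : Simple V] :
    ∃ φ : G →* ℂˣ, charKer V = (φ.ker : Set G) := by
  have hone : (𝟙 V : V ⟶ V) ≠ 0 := id_nonzero V
  have hnt : Nontrivial V := by
    by_contra h
    rw [not_nontrivial_iff_subsingleton] at h
    apply hone
    apply Action.hom_ext
    ext v
    exact @Subsingleton.elim _ h _ _
  have hfr : finrank ℂ (V ⟶ V) = 1 := by
    rw [FDRep.finrank_hom_simple_simple V V, if_pos ⟨Iso.refl V⟩]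
  have hspan := (finrank_eq_one_iff_of_nonzero' (𝟙 V) hone).mp hfr
  have hsc : ∀ g : G, ∃ c : ℂ, ρEnd V g = c • 𝟙 V :=
    fun g => (hspan (ρEnd V g)).imp (fun c hc => hc.symm)
  choose c hc using hsc
  have hρ : ∀ g, V.ρ g = c g • (LinearMap.id : V →ₗ[ℂ] V) :=
    fun g => congrArg (fun φ => φ.hom.hom.hom) (hc g)
  obtain ⟨v0, hv0⟩ := exists_ne (0 : V)
  have huniq : ∀ d d' : ℂ, d • (LinearMap.id : V →ₗ[ℂ] V) = d' • LinearMap.id → d = d' := by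
    intro d d' hdd
    have h2 : d • v0 = d' • v0 := congrArg (fun φ : V →ₗ[ℂ] V => φ v0) hdd
    exact smul_left_injective ℂ hv0 h2
  have hmul : ∀ g h : G, c (g * h) = c g * c h := by
    intro g h
    apply huniq
    rw [← hρ (g * h), map_mul, hρ g, hρ h]
    ext v
    simp [Module.End.mul_apply, smul_smul, mul_comm]
  have hone' : c 1 = 1 := by
    apply huniq
    rw [← hρ 1, map_one]
    ext v
    simp
  have hinvc : ∀ g : G, c g * c g⁻¹ = 1 := by
    intro g
    rw [← hmul, mul_inv_cancel, hone']
  let φ : G →* ℂˣ := MonoidHom.mk'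
    (fun g => ⟨c g, c g⁻¹, hinvc g, by rw [mul_comm]; exact hinvc g⟩)
    (fun g h => by ext; exact hmul g h)
  have hd0 : ((finrank ℂ V : ℂ)) ≠ 0 := by
    have : 0 < finrank ℂ V := finrank_pos
    exact_mod_cast this.ne'
  have hchar : ∀ g, V.character g = c g * (finrank ℂ V : ℂ) := by
    intro g
    show LinearMap.trace ℂ V (V.ρ g) = _
    rw [hρ g, map_smul, LinearMap.trace_id]
    simp [smul_eq_mul]
  refine ⟨φ, ?_⟩
  ext g
  simp only [charKer, Set.mem_setOf_eq, SetLike.mem_coe, MonoidHom.mem_ker]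
  rw [hchar g, FDRep.char_one]
  constructor
  · intro h
    have : c g = 1 := by
      have h1 : c g * (finrank ℂ V : ℂ) = 1 * (finrank ℂ V : ℂ) := by rw [h, one_mul]
      exact mul_right_cancel₀ hd0 h1
    exact Units.ext this
  · intro h
    have : c g = 1 := congrArg Units.val h
    rw [this, one_mul]

lemma card_formula (φ : G →* ℂˣ) [Fintype G] :
    Nat.card G = Nat.card φ.range * Nat.card φ.ker := by
  rw [Subgroup.card_eq_card_quotient_mul_card_subgroup φ.ker,
    Nat.card_congr (QuotientGroup.quotientKerEquivRange φ).toEquiv]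

lemma finite_range (φ : G →* ℂˣ) [Fintype G] : Finite φ.range := by
  have : (Set.range φ).Finite := Set.finite_range φ
  exact this.to_subtype

lemma card_range_dvd_exponent (φ : G →* ℂˣ) [Fintype G] :
    Nat.card φ.range ∣ Monoid.exponent G := by
  have hfin : Finite φ.range := finite_range φ
  have hcyc : IsCyclic φ.range := subgroup_units_cyclic _
  rw [← IsCyclic.exponent_eq_card]
  apply Monoid.exponent_dvd_of_forall_pow_eq_one
  rintro ⟨y, g, rfl⟩
  have h1 : (φ g) ^ Monoid.exponent G = 1 := by
    rw [← map_pow, Monoid.pow_exponent_eq_one, map_one]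
  exact Subtype.ext (by simpa using h1)

lemma card_range_eq_orderOf (χ : G →* ℂˣ) [Fintype G] :
    Nat.card χ.range = orderOf χ := by
  have hfin : Finite χ.range := finite_range χ
  have hcyc : IsCyclic χ.range := subgroup_units_cyclic _
  rw [← IsCyclic.exponent_eq_card]
  apply Nat.dvd_antisymm
  · apply Monoid.exponent_dvd_of_forall_pow_eq_one
    rintro ⟨y, g, rfl⟩
    have h1 : (χ g) ^ orderOf χ = 1 := by
      rw [← MonoidHom.pow_apply, pow_orderOf_eq_one χ, MonoidHom.one_apply]
    exact Subtype.ext (by simpa using h1)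
  · rw [orderOf_dvd_iff_pow_eq_one]
    apply MonoidHom.ext
    intro g
    rw [MonoidHom.pow_apply, MonoidHom.one_apply]
    have h1 : (⟨χ g, ⟨g, rfl⟩⟩ : χ.range) ^ Monoid.exponent χ.range = 1 :=
      Monoid.pow_exponent_eq_one _
    have h2 := congrArg Subtype.val h1
    simpa using h2

/-- The one-dimensional representation associated to a character `χ : G →* ℂˣ`. -/
noncomputable def repOfChar (χ : G →* ℂˣ) : Representation ℂ G ℂ where
  toFun g := (χ g : ℂ) • LinearMap.id
  map_one' := by ext; simp
  map_mul' g h := by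
    ext
    simp [Module.End.mul_apply, smul_smul, mul_comm]

lemma char_repOfChar (χ : G →* ℂˣ) (g : G) :
    (FDRep.of (repOfChar χ)).character g = (χ g : ℂ) := by
  show LinearMap.trace ℂ ℂ ((repOfChar χ) g) = (χ g : ℂ)
  show LinearMap.trace ℂ ℂ ((χ g : ℂ) • LinearMap.id) = (χ g : ℂ)
  rw [map_smul, LinearMap.trace_id]
  simp [finrank_self]

lemma charKer_repOfChar (χ : G →* ℂˣ) :
    charKer (FDRep.of (repOfChar χ)) = (χ.ker : Set G) := by
  ext g
  simp only [charKer, Set.mem_setOf_eq, SetLike.mem_coe, MonoidHom.mem_ker]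
  rw [char_repOfChar, char_repOfChar, map_one]
  constructor
  · intro h
    exact Units.ext (by simpa using h)
  · intro h
    rw [h]

end Schur

/-- For a finite Abelian `p`-group `G` with `|G| = p ^ n` and exponent `p ^ e`, the set of
orders of kernels of irreducible complex characters of `G` is `{p^{n-e}, …, p^n}`.
In particular, if `G` is elementary Abelian this set is `{p^{n-1}, p^n}`. -/
theorem kernel_orders_abelian (p n e : ℕ) (hp : p.Prime) (G : Type) [CommGroup G]
    [Fintype G] (hcard : Nat.card G = p ^ n) (hexp : Monoid.exponent G = p ^ e) :
    {k : ℕ | ∃ V : FDRep ℂ G, Simple V ∧ Nat.card (charKer V) = k} =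
      {k : ℕ | ∃ j : ℕ, n - e ≤ j ∧ j ≤ n ∧ k = p ^ j} ∧
    ((∀ g : G, g ^ p = 1) →
      {k : ℕ | ∃ V : FDRep ℂ G, Simple V ∧ Nat.card (charKer V) = k} =
        {p ^ (n - 1), p ^ n}) := by
  have hE : Monoid.ExponentExists G := Monoid.ExponentExists.of_finite
  have hen : e ≤ n := by
    have hdvd := Group.exponent_dvd_nat_card (G := G)
    rw [hexp, hcard] at hdvd
    exact (Nat.pow_dvd_pow_iff_le_right hp.one_lt).mp hdvd
  have hmain : {k : ℕ | ∃ V : FDRep ℂ G, Simple V ∧ Nat.card (charKer V) = k} =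
      {k : ℕ | ∃ j : ℕ, n - e ≤ j ∧ j ≤ n ∧ k = p ^ j} := by
    ext K
    simp only [Set.mem_setOf_eq]
    constructor
    · rintro ⟨V, hV, rfl⟩
      haveI := hV
      obtain ⟨φ, hφ⟩ := exists_char_hom V
      have hdvd : Nat.card φ.range ∣ p ^ e := by
        rw [← hexp]; exact card_range_dvd_exponent φ
      obtain ⟨i, hie, hi⟩ := (Nat.dvd_prime_pow hp).mp hdvd
      have hmul : p ^ n = p ^ i * Nat.card φ.ker := by
        rw [← hcard, ← hi]; exact card_formula φ
      have hin : i ≤ n := by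
        have : p ^ i ∣ p ^ n := Dvd.intro _ hmul.symm
        exact (Nat.pow_dvd_pow_iff_le_right hp.one_lt).mp this
      have hker : Nat.card φ.ker = p ^ (n - i) := by
        have hppos : 0 < p ^ i := pow_pos hp.pos i
        have : p ^ i * p ^ (n - i) = p ^ i * Nat.card φ.ker := by
          rw [← pow_add, Nat.add_sub_cancel' hin, ← hmul]
        exact (Nat.eq_of_mul_eq_mul_left hppos this).symm
      refine ⟨n - i, by omega, by omega, ?_⟩
      rw [hφ]
      show Nat.card φ.ker = p ^ (n - i)
      exact hker
    · rintro ⟨j, hj1, hj2, rfl⟩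
      obtain ⟨g₀, hg₀⟩ := Monoid.exists_orderOf_eq_exponent hE
      have hie : n - j ≤ e := by omega
      have hx : orderOf (g₀ ^ p ^ (e - (n - j))) = p ^ (n - j) := by
        rw [orderOf_pow, hg₀, hexp,
          Nat.gcd_eq_right (pow_dvd_pow p (by omega)),
          Nat.pow_div (by omega) hp.pos,
          show e - (e - (n - j)) = n - j by omega]
      haveI : NeZero (Monoid.exponent G) := ⟨hE.exponent_ne_zero⟩
      obtain ⟨eqv⟩ := CommGroup.monoidHom_mulEquiv_of_hasEnoughRootsOfUnity G ℂ
      set χ : G →* ℂˣ := eqv.symm (g₀ ^ p ^ (e - (n - j))) with hχdef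
      have hχ : orderOf χ = p ^ (n - j) := by
        rw [hχdef, eqv.symm.orderOf_eq, hx]
      haveI hS : Simple (FDRep.of (repOfChar χ)) :=
        fdRep_simple_of_finrank_eq_one _ (finrank_self ℂ)
      refine ⟨FDRep.of (repOfChar χ), hS, ?_⟩
      rw [charKer_repOfChar]
      show Nat.card χ.ker = p ^ j
      have hrange : Nat.card χ.range = p ^ (n - j) := by
        rw [card_range_eq_orderOf, hχ]
      have hmul : p ^ n = p ^ (n - j) * Nat.card χ.ker := by
        rw [← hcard, ← hrange]; exact card_formula χ
      have hppos : 0 < p ^ (n - j) := pow_pos hp.pos _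
      have : p ^ (n - j) * p ^ j = p ^ (n - j) * Nat.card χ.ker := by
        rw [← pow_add, show n - j + j = n by omega, ← hmul]
      exact (Nat.eq_of_mul_eq_mul_left hppos this).symm
  refine ⟨hmain, ?_⟩
  intro helem
  rw [hmain]
  have he1 : e ≤ 1 := by
    have hdvd : Monoid.exponent G ∣ p := Monoid.exponent_dvd_of_forall_pow_eq_one helem
    rw [hexp] at hdvd
    by_contra hcon
    push_neg at hcon
    have : p ^ 2 ∣ p ^ e := pow_dvd_pow p (by omega)
    have h2 : p ^ 2 ∣ p := this.trans hdvd
    have := (Nat.pow_dvd_pow_iff_le_right hp.one_lt).mp (h2.trans (dvd_pow_self p one_ne_zero))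
    omega
  interval_cases e
  · -- e = 0 : G trivial
    have hG : Nat.card G = 1 := by
      have hexp1 : Monoid.exponent G = 1 := by simpa using hexp
      have hsub : ∀ g : G, g = 1 := fun g => by
        have h1 := Monoid.pow_exponent_eq_one g
        rwa [hexp1, pow_one] at h1
      exact Nat.card_eq_one_iff_unique.mpr ⟨⟨fun a b => (hsub a).trans (hsub b).symm⟩, ⟨1⟩⟩
    have hn0 : n = 0 := by
      have hpn : p ^ n = 1 := by rw [← hcard, hG]
      by_contra hcon
      have := Nat.one_lt_pow hcon hp.one_lt
      omega
    subst hn0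
    ext K
    simp only [Set.mem_setOf_eq, Set.mem_insert_iff, Set.mem_singleton_iff]
    constructor
    · rintro ⟨j, h1, h2, rfl⟩
      interval_cases j
      simp
    · rintro (rfl | rfl)
      · exact ⟨0, by omega, by omega, by norm_num⟩
      · exact ⟨0, by omega, by omega, by norm_num⟩
  · -- e = 1
    ext K
    simp only [Set.mem_setOf_eq, Set.mem_insert_iff, Set.mem_singleton_iff]
    constructor
    · rintro ⟨j, h1, h2, rfl⟩
      have : j = n - 1 ∨ j = n := by omega
      rcases this with rfl | rfl
      · left; rfl
      · right; rfl
    · rintro (rfl | rfl)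
      · exact ⟨n - 1, by omega, by omega, rfl⟩
      · exact ⟨n, by omega, by omega, rfl⟩
end

section
/- Let p be an odd prime and let G be a finite p-group with |G'| = p. Then (G, Z(G)) is a generalized Camina pair; that is, every non-linear irreducible complex character of G vanishes on G \ Z(G). -/
open CategoryTheory

section Aux
open FDRep
variable {G : Type} [Group G]

variable {G : Type} [Group G]

/-- A linear endomorphism commuting with the action gives an endomorphism in `FDRep`. -/
def homOfComm (V : FDRep ℂ G) (f : V →ₗ[ℂ] V)
    (hf : ∀ g : G, (V.ρ g) * f = f * (V.ρ g)) : V ⟶ V where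
  hom := FGModuleCat.ofHom f
  comm := fun g => by
    ext v
    exact LinearMap.congr_fun (hf g).symm v

lemma homOfComm_hom (V : FDRep ℂ G) (f : V →ₗ[ℂ] V) (hf) :
    (homOfComm V f hf).hom.hom.hom = f := rfl

lemma smul_id_hom (V : FDRep ℂ G) (ω : ℂ) : (ω • 𝟙 V).hom.hom.hom = (ω • LinearMap.id : V →ₗ[ℂ] V) := rfl

lemma central_smul (V : FDRep ℂ G) [Simple V] {c : G} (hc : c ∈ Subgroup.center G) :
    ∃ ω : ℂ, V.ρ c = ω • LinearMap.id := by
  have hf : ∀ g : G, V.ρ g * V.ρ c = V.ρ c * V.ρ g := fun g => by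
    rw [← map_mul, ← map_mul, (Subgroup.mem_center_iff.mp hc g)]
  obtain ⟨ω, hω⟩ := endomorphism_simple_eq_smul_id ℂ (homOfComm V (V.ρ c) hf)
  exact ⟨ω, by rw [← homOfComm_hom V (V.ρ c) hf, ← hω, smul_id_hom]⟩

lemma char_mul_central (V : FDRep ℂ G) {c : G} {ω : ℂ}
    (hω : V.ρ c = ω • LinearMap.id) (g : G) :
    V.character (g * c) = ω * V.character g := by
  show LinearMap.trace ℂ V (V.ρ (g * c)) = ω * LinearMap.trace ℂ V (V.ρ g)
  rw [map_mul, hω, mul_smul_comm, Module.End.mul_eq_comp, LinearMap.comp_id, map_smul, smul_eq_mul]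

lemma not_all_scalar (V : FDRep ℂ G) [Simple V] (hd : 1 < Module.finrank ℂ V)
    (hsc : ∀ a : G, ∃ ω : ℂ, V.ρ a = ω • LinearMap.id) : False := by
  have b := Module.finBasis ℂ V
  set n := Module.finrank ℂ V with hn
  let i0 : Fin n := ⟨0, by omega⟩
  let i1 : Fin n := ⟨1, hd⟩
  let f : V →ₗ[ℂ] V := b.constr ℂ (fun i => if i = i0 then b i0 else 0)
  have hcomm : ∀ a : G, V.ρ a * f = f * V.ρ a := by
    intro a
    obtain ⟨ω, hω⟩ := hsc a
    rw [hω]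
    ext v
    simp
  obtain ⟨μ, hμ⟩ := endomorphism_simple_eq_smul_id ℂ (homOfComm V f hcomm)
  have hf : f = μ • LinearMap.id := by
    rw [← homOfComm_hom V f hcomm, ← hμ, smul_id_hom]
  have h0 : f (b i0) = b i0 := by simp [f, Module.Basis.constr_basis]
  have h1 : f (b i1) = 0 := by
    have : i1 ≠ i0 := by simp [i0, i1, Fin.ext_iff]
    simp [f, Module.Basis.constr_basis, this]
  rw [hf] at h0 h1
  simp only [LinearMap.smul_apply, LinearMap.id_apply] at h0 h1
  rcases smul_eq_zero.mp h1 with h | h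
  · rw [h, zero_smul] at h0
    exact b.ne_zero i0 h0.symm
  · exact b.ne_zero i1 h

lemma zpowers_eq_commutator {p : ℕ} (hp : p.Prime) (hG' : Nat.card (commutator G) = p)
    {c : G} (hc : c ∈ commutator G) (hc1 : c ≠ 1) : Subgroup.zpowers c = commutator G := by
  have hfin : Finite (commutator G) := Nat.finite_of_card_ne_zero (by rw [hG']; exact hp.pos.ne')
  have hle : Subgroup.zpowers c ≤ commutator G := Subgroup.zpowers_le.mpr hc
  have hdvd : orderOf c ∣ p := by
    have h := orderOf_dvd_natCard (⟨c, hc⟩ : commutator G)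
    rwa [Subgroup.orderOf_mk, hG'] at h
  have horder : orderOf c = p := by
    rcases (Nat.Prime.eq_one_or_self_of_dvd hp _ hdvd) with h | h
    · exact absurd (orderOf_eq_one_iff.mp h) hc1
    · exact h
  refine Subgroup.eq_of_le_of_card_ge hle ?_
  rw [hG', Nat.card_zpowers, horder]

lemma commutator_le_center_aux {p : ℕ} [Fact p.Prime] [Finite G] (hpG : IsPGroup p G)
    (hG' : Nat.card (commutator G) = p) : commutator G ≤ Subgroup.center G := by
  have hP : IsPGroup p (ConjAct G) := hpG.of_equiv ConjAct.toConjAct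
  have h1 : (1 : commutator G) ∈ MulAction.fixedPoints (ConjAct G) (commutator G) := by
    intro g
    ext
    rw [ConjAct.Subgroup.val_conj_smul]
    simp
  obtain ⟨b, hb, hb1⟩ := hP.exists_fixed_point_of_prime_dvd_card_of_fixed_point
    (α := ↥(commutator G)) (by rw [hG']) h1
  have hbc : (b : G) ∈ Subgroup.center G := by
    rw [Subgroup.mem_center_iff]
    intro g
    have h := congrArg Subtype.val (hb (ConjAct.toConjAct g))
    rw [ConjAct.Subgroup.val_conj_smul, ConjAct.toConjAct_smul] at h
    calc g * b = g * b * g⁻¹ * g := by group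
    _ = b * g := by rw [h]
  have hbne : (b : G) ≠ 1 := by
    intro h
    exact hb1 (Subtype.ext h.symm)
  rw [← zpowers_eq_commutator (Fact.out) hG' b.2 hbne]
  exact Subgroup.zpowers_le.mpr hbc

/-- The set of elements acting as identity forms a subgroup. -/
def repKer (V : FDRep ℂ G) : Subgroup G where
  carrier := {x | V.ρ x = LinearMap.id}
  one_mem' := by simp [Set.mem_setOf_eq, map_one]; rfl
  mul_mem' := fun {a b} ha hb => by
    simp only [Set.mem_setOf_eq] at *
    rw [map_mul, ha, hb, Module.End.mul_eq_comp, LinearMap.comp_id]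
  inv_mem' := fun {a} ha => by
    simp only [Set.mem_setOf_eq] at *
    have : V.ρ a⁻¹ * V.ρ a = LinearMap.id := by rw [← map_mul, inv_mul_cancel, map_one]; rfl
    rwa [ha, Module.End.mul_eq_comp, LinearMap.comp_id] at this


end Aux

open scoped commutatorElement

/-- Let `p` be an odd prime and `G` a finite `p`-group with `|G'| = p`. Then
`(G, Z(G))` is a generalized Camina pair: every non-linear irreducible complex character
of `G` vanishes on `G \ Z(G)`. -/
theorem gcp_of_commutator_order_p (p : ℕ) (hp : p.Prime) (hodd : Odd p)
    (G : Type) [Group G] [Fintype G] (hpG : IsPGroup p G)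
    (hG' : Nat.card (commutator G) = p) :
    ∀ V : FDRep ℂ G, Simple V → 1 < Module.finrank ℂ V →
      ∀ g : G, g ∉ Subgroup.center G → V.character g = 0 := by
  intro V hV hd g hg
  haveI := hV
  haveI : Fact p.Prime := ⟨hp⟩
  have hle : commutator G ≤ Subgroup.center G := commutator_le_center_aux hpG hG'
  rw [Subgroup.mem_center_iff] at hg
  push_neg at hg
  obtain ⟨x, hx⟩ := hg
  set c := ⁅g⁻¹, x⁆ with hc_def
  have hcmem : c ∈ commutator G := by
    rw [commutator_def]
    exact Subgroup.commutator_mem_commutator (Subgroup.mem_top _) (Subgroup.mem_top _)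
  have hc1 : c ≠ 1 := by
    intro h
    rw [hc_def, commutatorElement_eq_one_iff_mul_comm] at h
    apply hx
    calc x * g = g * (g⁻¹ * x) * g := by group
    _ = g * (x * g⁻¹) * g := by rw [h]
    _ = g * x := by group
  obtain ⟨ω, hω⟩ := central_smul V (hle hcmem)
  have hconj : x * g * x⁻¹ = g * c := by rw [hc_def]; group
  have hchi : V.character g = ω * V.character g := by
    conv_lhs => rw [← FDRep.char_conj V g x, hconj, char_mul_central V hω]
  have hω1 : ω ≠ 1 := by
    intro h1
    rw [h1, one_smul] at hω
    have hz : Subgroup.zpowers c = commutator G := zpowers_eq_commutator hp hG' hcmem hc1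
    have hker : commutator G ≤ repKer V := by
      rw [← hz]
      exact Subgroup.zpowers_le.mpr hω
    have hcomm : ∀ a b : G, V.ρ a * V.ρ b = V.ρ b * V.ρ a := by
      intro a b
      have hmem : ⁅a, b⁆ ∈ commutator G := by
        rw [commutator_def]
        exact Subgroup.commutator_mem_commutator (Subgroup.mem_top _) (Subgroup.mem_top _)
      have habk : V.ρ ⁅a, b⁆ = LinearMap.id := hker hmem
      have hab : a * b = ⁅a, b⁆ * (b * a) := by group
      rw [← map_mul, ← map_mul, hab, map_mul, habk, Module.End.mul_eq_comp, LinearMap.id_comp]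
    exact not_all_scalar V hd fun a =>
      ⟨_, by rw [← homOfComm_hom V (V.ρ a) (fun b => hcomm b a),
        ← (endomorphism_simple_eq_smul_id ℂ (homOfComm V (V.ρ a) (fun b => hcomm b a))).choose_spec,
        smul_id_hom]⟩
  have : (1 - ω) * V.character g = 0 := by rw [sub_mul, one_mul, ← hchi, sub_self]
  rcases mul_eq_zero.mp this with h | h
  · exact absurd (by linear_combination -h : ω = 1) hω1
  · exact h
end
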